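/- Let f be an invertible linear map of P² given by f(x:y:z) = (x : y/2 : −z/3). Then the line L = V(x + y + z) is improper under f (indeed L contains the points f^i(5:−32:27) for i = 0, 2, 3), but L is not improper under f²: there do not exist integers 0 ≤ i₀ < i₁ < i₂ such that (f²)^{i₀}(L) ∩ (f²)^{i₁}(L) ∩ (f²)^{i₂}(L) ≠ ∅. -/

import Mathlib

section Aux18

private lemma mk_congr18 {v w : Fin 3 → ℝ} (hv : v ≠ 0) (hw : w ≠ 0) (h : v = w) :
    Projectivization.mk ℝ v hv = Projectivization.mk ℝ w hw := by subst h; rfl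

private lemma mem_line18 {a b c : ℝ} {v : Fin 3 → ℝ} (hv : v ≠ 0) :
    a * (Projectivization.mk ℝ v hv).rep 0 + b * (Projectivization.mk ℝ v hv).rep 1
      + c * (Projectivization.mk ℝ v hv).rep 2 = 0
      ↔ a * v 0 + b * v 1 + c * v 2 = 0 := by
  obtain ⟨u, hu⟩ := Projectivization.exists_smul_eq_mk_rep ℝ v hv
  have h0 : (Projectivization.mk ℝ v hv).rep 0 = (u : ℝ) * v 0 := by rw [← hu]; rfl
  have h1 : (Projectivization.mk ℝ v hv).rep 1 = (u : ℝ) * v 1 := by rw [← hu]; rfl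
  have h2 : (Projectivization.mk ℝ v hv).rep 2 = (u : ℝ) * v 2 := by rw [← hu]; rfl
  rw [h0, h1, h2]
  have hu0 : (u : ℝ) ≠ 0 := u.ne_zero
  constructor
  · intro h
    have : (u : ℝ) * (a * v 0 + b * v 1 + c * v 2) = 0 := by linarith
    rcases mul_eq_zero.1 this with h' | h'
    · exact absurd h' hu0
    · exact h'
  · intro h
    have : (u : ℝ) * (a * v 0 + b * v 1 + c * v 2) = (u : ℝ) * 0 := by rw [h]
    nlinarith [this]

private lemma step18 (f : Projectivization ℝ (Fin 3 → ℝ) → Projectivization ℝ (Fin 3 → ℝ))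
    (hf : ∀ (x : Fin 3 → ℝ) (hx : x ≠ 0)
        (hx' : (![x 0, x 1 / 2, -(x 2 / 3)] : Fin 3 → ℝ) ≠ 0),
      f (Projectivization.mk ℝ x hx) =
        Projectivization.mk ℝ ![x 0, x 1 / 2, -(x 2 / 3)] hx')
    (v : Fin 3 → ℝ) (hv : v ≠ 0) (w : Fin 3 → ℝ) (hw : w ≠ 0)
    (h0 : w 0 = v 0) (h1 : w 1 = v 1 / 2) (h2 : w 2 = -(v 2 / 3)) :
    f (Projectivization.mk ℝ v hv) = Projectivization.mk ℝ w hw := by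
  have hx' : (![v 0, v 1 / 2, -(v 2 / 3)] : Fin 3 → ℝ) ≠ 0 := by
    intro h
    apply hv
    funext i
    fin_cases i
    · simpa using congrFun h 0
    · have := congrFun h 1
      simp at this
      simp [this]
    · have := congrFun h 2
      simp at this
      simp [this]
  rw [hf v hv hx']
  apply mk_congr18
  funext i
  fin_cases i <;> simp [h0, h1, h2]

private lemma image_line18
    (f : Projectivization ℝ (Fin 3 → ℝ) → Projectivization ℝ (Fin 3 → ℝ))
    (hf : ∀ (x : Fin 3 → ℝ) (hx : x ≠ 0)
        (hx' : (![x 0, x 1 / 2, -(x 2 / 3)] : Fin 3 → ℝ) ≠ 0),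
      f (Projectivization.mk ℝ x hx) =
        Projectivization.mk ℝ ![x 0, x 1 / 2, -(x 2 / 3)] hx')
    (a b c : ℝ) :
    f '' {P : Projectivization ℝ (Fin 3 → ℝ) |
        a * P.rep 0 + b * P.rep 1 + c * P.rep 2 = 0}
      = {P | a * P.rep 0 + 2*b * P.rep 1 + -3*c * P.rep 2 = 0} := by
  ext P
  constructor
  · rintro ⟨Q, hQ, rfl⟩
    have hQrep := Q.rep_nonzero
    have hmkQ : Projectivization.mk ℝ Q.rep hQrep = Q := Q.mk_rep
    set v := Q.rep with hv
    have hw : (![v 0, v 1 / 2, -(v 2 / 3)] : Fin 3 → ℝ) ≠ 0 := by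
      intro h
      apply hQrep
      funext i
      fin_cases i
      · simpa using congrFun h 0
      · have := congrFun h 1; simp at this; simp [this]
      · have := congrFun h 2; simp at this; simp [this]
    have : f Q = Projectivization.mk ℝ ![v 0, v 1 / 2, -(v 2 / 3)] hw := by
      rw [← hmkQ]
      exact step18 f hf v hQrep _ hw (by simp) (by simp) (by simp)
    rw [this]
    show a * _ + 2*b * _ + -3*c * _ = 0
    rw [mem_line18 hw]
    simp only [Matrix.cons_val_zero, Matrix.cons_val_one, Matrix.head_cons]
    have hQ' : a * v 0 + b * v 1 + c * v 2 = 0 := hQ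
    have h2 : (![v 0, v 1 / 2, -(v 2 / 3)] : Fin 3 → ℝ) 2 = -(v 2 / 3) := by simp
    rw [h2]
    ring_nf
    linarith [hQ']
  · intro hP
    have hPrep := P.rep_nonzero
    set v := P.rep with hv
    have hP' : a * v 0 + 2*b * v 1 + -3*c * v 2 = 0 := hP
    have hwne : (![v 0, 2 * v 1, -3 * v 2] : Fin 3 → ℝ) ≠ 0 := by
      intro h
      apply hPrep
      funext i
      fin_cases i
      · simpa using congrFun h 0
      · have := congrFun h 1; simp at this; simp [this]
      · have := congrFun h 2; simp at this; simp [this]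
    refine ⟨Projectivization.mk ℝ ![v 0, 2 * v 1, -3 * v 2] hwne, ?_, ?_⟩
    · show a * _ + b * _ + c * _ = 0
      rw [mem_line18 hwne]
      simp only [Matrix.cons_val_zero, Matrix.cons_val_one, Matrix.head_cons]
      have h2 : (![v 0, 2 * v 1, -3 * v 2] : Fin 3 → ℝ) 2 = -3 * v 2 := by simp
      rw [h2]
      linarith [hP']
    · have := step18 f hf (![v 0, 2 * v 1, -3 * v 2]) hwne v hPrep
        (by simp) (by simp) (by simp; ring)
      rw [this, P.mk_rep]

private lemma iter_image18
    (f : Projectivization ℝ (Fin 3 → ℝ) → Projectivization ℝ (Fin 3 → ℝ))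
    (hf : ∀ (x : Fin 3 → ℝ) (hx : x ≠ 0)
        (hx' : (![x 0, x 1 / 2, -(x 2 / 3)] : Fin 3 → ℝ) ≠ 0),
      f (Projectivization.mk ℝ x hx) =
        Projectivization.mk ℝ ![x 0, x 1 / 2, -(x 2 / 3)] hx')
    (n : ℕ) :
    f^[n] '' {P : Projectivization ℝ (Fin 3 → ℝ) | P.rep 0 + P.rep 1 + P.rep 2 = 0}
      = {P | 1 * P.rep 0 + 2^n * P.rep 1 + (-3)^n * P.rep 2 = 0} := by
  induction n with
  | zero =>
    simp only [Function.iterate_zero, Set.image_id, pow_zero]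
    ext P
    simp only [Set.mem_setOf_eq]
    constructor <;> intro h <;> linarith
  | succ n ih =>
    rw [Function.iterate_succ', Set.image_comp, ih,
      image_line18 f hf 1 (2^n) ((-3)^n)]
    ext P
    simp only [Set.mem_setOf_eq]
    rw [pow_succ, pow_succ]
    constructor <;> intro h <;> linarith

private lemma aux_pq18 (p q : ℕ) (hp : 1 ≤ p) (hq : 1 ≤ q) :
    ((4:ℝ)^(p+q) - 1) * (9^p - 1) < (4^p - 1) * (9^(p+q) - 1) := by
  have h2q : (2:ℝ) ≤ 2^q := le_self_pow₀ (by norm_num) (by omega)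
  have h89 : (8:ℝ)^q ≤ 9^q := pow_le_pow_left₀ (by norm_num) (by norm_num) q
  have h1 : (2:ℝ) * 4^q ≤ 9^q := by
    calc (2:ℝ) * 4^q ≤ 2^q * 4^q := by
          nlinarith [pow_pos (show (0:ℝ) < 4 by norm_num) q]
    _ = 8^q := by rw [← mul_pow]; norm_num
    _ ≤ 9^q := h89
  have h4p : (2:ℝ) ≤ 4^p :=
    le_trans (by norm_num) (le_self_pow₀ (by norm_num) (by omega) : (4:ℝ) ≤ 4^p)
  have h9p : (0:ℝ) < 9^p := pow_pos (by norm_num) p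
  have h2' : (2:ℝ) * 9^p ≤ 4^p * 9^p := by nlinarith
  have h4q1 : (0:ℝ) < 4^q - 1 := by
    have : (4:ℝ) ≤ 4^q := le_self_pow₀ (by norm_num) (by omega)
    linarith
  have h94p : (0:ℝ) < 9^p - 4^p := by
    have := pow_lt_pow_left₀ (show (4:ℝ) < 9 by norm_num)
      (by norm_num : (0:ℝ) ≤ 4) (by omega : p ≠ 0)
    linarith
  have h4pq : (0:ℝ) < 4^p := by positivity
  have h1' : (4:ℝ)^q - 1 < 9^q - 4^q := by linarith
  have h2'' : (9:ℝ)^p - 4^p < 4^p * 9^p - 9^p := by linarith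
  have key : ((4:ℝ)^q - 1) * (9^p - 4^p) < (9^q - 4^q) * (4^p * 9^p - 9^p) :=
    mul_lt_mul h1' h2''.le h94p (by linarith)
  rw [pow_add, pow_add]
  nlinarith [key]

private lemma keyineq18 (i j k : ℕ) (hij : i < j) (hjk : j < k) :
    ((4:ℝ)^k - 4^i) * (9^j - 9^i) < (4^j - 4^i) * (9^k - 9^i) := by
  obtain ⟨p, hp, rfl⟩ : ∃ p, 1 ≤ p ∧ j = i + p := ⟨j - i, by omega, by omega⟩
  obtain ⟨q, hq, rfl⟩ : ∃ q, 1 ≤ q ∧ k = i + p + q := ⟨k - (i+p), by omega, by omega⟩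
  have h := aux_pq18 p q hp hq
  have hpos : (0:ℝ) < 4^i * 9^i := by positivity
  have e1 : (4:ℝ)^(i+p) = 4^i * 4^p := pow_add 4 i p
  have e2 : (4:ℝ)^(i+p+q) = 4^i * 4^(p+q) := by rw [← pow_add]; ring_nf
  have e3 : (9:ℝ)^(i+p) = 9^i * 9^p := pow_add 9 i p
  have e4 : (9:ℝ)^(i+p+q) = 9^i * 9^(p+q) := by rw [← pow_add]; ring_nf
  rw [e1, e2, e3, e4]
  nlinarith [h, hpos, mul_pos hpos (sub_pos.2 h)]

end Aux18

/-- For the invertible linear map `f(x:y:z) = (x : y/2 : −z/3)` of `P²`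
(over `ℝ`), the line `L = V(x + y + z)` is improper under `f` — indeed `L` contains the
points `f^i(5 : −32 : 27)` for `i = 0, 2, 3` — but `L` is not improper under `f²`:
there are no `0 ≤ i₀ < i₁ < i₂` with `(f²)^{i₀}(L) ∩ (f²)^{i₁}(L) ∩ (f²)^{i₂}(L) ≠ ∅`. -/
theorem improper_not_improper_square
    (f : Projectivization ℝ (Fin 3 → ℝ) → Projectivization ℝ (Fin 3 → ℝ))
    (hf : ∀ (x : Fin 3 → ℝ) (hx : x ≠ 0)
        (hx' : (![x 0, x 1 / 2, -(x 2 / 3)] : Fin 3 → ℝ) ≠ 0),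
      f (Projectivization.mk ℝ x hx) =
        Projectivization.mk ℝ ![x 0, x 1 / 2, -(x 2 / 3)] hx')
    (L : Set (Projectivization ℝ (Fin 3 → ℝ)))
    (hL : L = {P | P.rep 0 + P.rep 1 + P.rep 2 = 0}) :
    (∀ i ∈ ({0, 2, 3} : Set ℕ),
      f^[i] (Projectivization.mk ℝ ![5, -32, 27]
        (by intro h; have := congrFun h 0; norm_num at this)) ∈ L) ∧
    (∃ i : Fin 3 → ℕ, StrictMono i ∧ (⋂ k, f^[i k] '' L).Nonempty) ∧
    ¬ (∃ i : Fin 3 → ℕ, StrictMono i ∧ (⋂ k, (f ∘ f)^[i k] '' L).Nonempty) := by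
  -- nonzero-ness lemmas for the concrete vectors
  have hne : ∀ b c : ℝ, (![(5:ℝ), b, c] : Fin 3 → ℝ) ≠ 0 := by
    intro b c h
    have := congrFun h 0
    norm_num at this
  -- membership criterion for L
  have memL : ∀ (v : Fin 3 → ℝ) (hv : v ≠ 0),
      Projectivization.mk ℝ v hv ∈ L ↔ v 0 + v 1 + v 2 = 0 := by
    intro v hv
    rw [hL]
    have := mem_line18 (a := 1) (b := 1) (c := 1) hv
    simp only [one_mul] at this
    exact this
  -- concrete iteration steps
  have hs1 : f (Projectivization.mk ℝ ![5,-32,27] (hne _ _))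
      = Projectivization.mk ℝ ![5,-16,-9] (hne _ _) :=
    step18 f hf _ _ _ _ (by norm_num) (by norm_num) (by norm_num [Matrix.cons_val_two])
  have hs2 : f (Projectivization.mk ℝ ![5,-16,-9] (hne _ _))
      = Projectivization.mk ℝ ![5,-8,3] (hne _ _) :=
    step18 f hf _ _ _ _ (by norm_num) (by norm_num) (by norm_num [Matrix.cons_val_two])
  have hs3 : f (Projectivization.mk ℝ ![5,-8,3] (hne _ _))
      = Projectivization.mk ℝ ![5,-4,-1] (hne _ _) :=
    step18 f hf _ _ _ _ (by norm_num) (by norm_num) (by norm_num [Matrix.cons_val_two])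
  refine ⟨?_, ?_, ?_⟩
  · -- part 1
    intro i hi
    have hQ : Projectivization.mk ℝ ![(5:ℝ), -32, 27]
        (by intro h; have := congrFun h 0; norm_num at this)
        = Projectivization.mk ℝ ![(5:ℝ), -32, 27] (hne _ _) := rfl
    rcases hi with rfl | rfl | rfl
    · rw [Function.iterate_zero_apply, hQ, memL]
      norm_num [Matrix.cons_val_two]
    · show f (f (Projectivization.mk ℝ ![(5:ℝ), -32, 27] _)) ∈ L
      rw [hQ, hs1, hs2, memL]
      norm_num [Matrix.cons_val_two]
    · show f (f (f (Projectivization.mk ℝ ![(5:ℝ), -32, 27] _))) ∈ L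
      rw [hQ, hs1, hs2, hs3, memL]
      norm_num [Matrix.cons_val_two]
  · -- part 2: improper under f, witnessed by indices 0, 1, 3 and point (5 : -4 : -1)
    refine ⟨![0, 1, 3], by decide, Projectivization.mk ℝ ![5,-4,-1] (hne _ _), ?_⟩
    rw [Set.mem_iInter]
    intro k
    have him : ∀ n : ℕ, f^[n] '' L
        = {P : Projectivization ℝ (Fin 3 → ℝ) |
            1 * P.rep 0 + 2^n * P.rep 1 + (-3)^n * P.rep 2 = 0} := by
      intro n; rw [hL]; exact iter_image18 f hf n
    fin_cases k
    · show _ ∈ f^[(![0,1,3] : Fin 3 → ℕ) 0] '' L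
      rw [show (![0,1,3] : Fin 3 → ℕ) 0 = 0 from rfl, him 0]
      show (1:ℝ) * _ + _ + _ = 0
      rw [mem_line18]
      norm_num [Matrix.cons_val_two]
    · show _ ∈ f^[(![0,1,3] : Fin 3 → ℕ) 1] '' L
      rw [show (![0,1,3] : Fin 3 → ℕ) 1 = 1 from rfl, him 1]
      show (1:ℝ) * _ + _ + _ = 0
      rw [mem_line18]
      norm_num [Matrix.cons_val_two]
    · show _ ∈ f^[(![0,1,3] : Fin 3 → ℕ) 2] '' L
      rw [show (![0,1,3] : Fin 3 → ℕ) 2 = 3 from rfl, him 3]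
      show (1:ℝ) * _ + _ + _ = 0
      rw [mem_line18]
      norm_num [Matrix.cons_val_two]
  · -- part 3: not improper under f ∘ f
    rintro ⟨i, hmono, P, hP⟩
    have hsq : ∀ m : ℕ, (f ∘ f)^[m] = f^[2*m] := by
      intro m
      rw [Function.iterate_mul]
      rfl
    have him : ∀ m : ℕ, (f ∘ f)^[m] '' L
        = {P : Projectivization ℝ (Fin 3 → ℝ) |
            1 * P.rep 0 + 4^m * P.rep 1 + 9^m * P.rep 2 = 0} := by
      intro m
      rw [hsq m, hL, iter_image18 f hf (2*m)]
      have e1 : (2:ℝ)^(2*m) = 4^m := by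
        rw [pow_mul]; norm_num
      have e2 : ((-3):ℝ)^(2*m) = 9^m := by
        rw [pow_mul]; norm_num
      rw [e1, e2]
    rw [Set.mem_iInter] at hP
    have E : ∀ k : Fin 3, 1 * P.rep 0 + 4^(i k) * P.rep 1 + 9^(i k) * P.rep 2 = 0 := by
      intro k
      have := hP k
      rw [him (i k)] at this
      exact this
    have h01 : i 0 < i 1 := hmono (by decide : (0 : Fin 3) < 1)
    have h12 : i 1 < i 2 := hmono (by decide : (1 : Fin 3) < 2)
    set r0 := P.rep 0
    set r1 := P.rep 1
    set r2 := P.rep 2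
    have E0 := E 0
    have E1 := E 1
    have E2 := E 2
    have hD := keyineq18 (i 0) (i 1) (i 2) h01 h12
    have e1 : ((4:ℝ)^(i 1) - 4^(i 0)) * r1 + ((9:ℝ)^(i 1) - 9^(i 0)) * r2 = 0 := by
      linear_combination E1 - E0
    have e2 : ((4:ℝ)^(i 2) - 4^(i 0)) * r1 + ((9:ℝ)^(i 2) - 9^(i 0)) * r2 = 0 := by
      linear_combination E2 - E0
    have hr1 : (((4:ℝ)^(i 1) - 4^(i 0)) * (9^(i 2) - 9^(i 0))
        - ((4:ℝ)^(i 2) - 4^(i 0)) * (9^(i 1) - 9^(i 0))) * r1 = 0 := by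
      linear_combination ((9:ℝ)^(i 2) - 9^(i 0)) * e1 - ((9:ℝ)^(i 1) - 9^(i 0)) * e2
    have hr1' : r1 = 0 := by
      rcases mul_eq_zero.1 hr1 with h | h
      · exfalso; linarith
      · exact h
    have h9 : (9:ℝ)^(i 0) < 9^(i 1) :=
      pow_lt_pow_right₀ (by norm_num) h01
    have hr2' : r2 = 0 := by
      rw [hr1'] at e1
      have : ((9:ℝ)^(i 1) - 9^(i 0)) * r2 = 0 := by linarith
      rcases mul_eq_zero.1 this with h | h
      · exfalso; linarith
      · exact h
    have hr0' : r0 = 0 := by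
      rw [hr1', hr2'] at E0
      linarith
    apply P.rep_nonzero
    funext j
    fin_cases j
    · exact hr0'
    · exact hr1'
    · exact hr2'
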